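/- For R' ≥ 0 and sequences of nonnegative reals (a_k), (b_k), the Cauchy-product-type estimate holds: Σ_k k!^{R'} c^k Σ_{j=0}^{k} a_j b_{k−j} ≤ (Σ_k k!^{R'} (2^{R'} c)^k a_k)·(Σ_k k!^{R'} (2^{R'} c)^k b_k), using binom(k,j)^{R'} ≤ 2^{kR'} and j!·(k−j)! ≤ k! for all 0 ≤ j ≤ k. (This is the submultiplicativity estimate q_{R,c}(φψ) ≤ q_{R,2^R c}(φ)·q_{R,2^R c}(ψ) for R-entire seminorms; for R' ≤ 0 the seminorms are submultiplicative with the same c.) -/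

import Mathlib

open scoped ENNReal

lemma fact_le_aux' {k j : ℕ} (hj : j ≤ k) :
    (k.factorial : ℝ≥0∞) ≤ (j.factorial : ℝ≥0∞) * ((k - j).factorial : ℝ≥0∞) * 2 ^ k := by
  have hchoose : k.choose j ≤ 2 ^ k := by
    calc k.choose j ≤ ∑ i ∈ Finset.range (k + 1), k.choose i :=
          Finset.single_le_sum (fun i _ => Nat.zero_le _)
            (Finset.mem_range.2 (Nat.lt_succ_of_le hj))
      _ = 2 ^ k := Nat.sum_range_choose k
  have h : k.factorial ≤ j.factorial * (k - j).factorial * 2 ^ k := by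
    calc k.factorial = k.choose j * j.factorial * (k - j).factorial :=
          (Nat.choose_mul_factorial_mul_factorial hj).symm
      _ ≤ 2 ^ k * j.factorial * (k - j).factorial := by gcongr
      _ = j.factorial * (k - j).factorial * 2 ^ k := by ring
  exact_mod_cast h


lemma ennreal_cauchy_product (f g : ℕ → ℝ≥0∞) :
    (∑' n, f n) * (∑' n, g n) = ∑' n, ∑ j ∈ Finset.range (n + 1), f j * g (n - j) := by
  have h1 : (∑' n, f n) * (∑' n, g n) = ∑' p : ℕ × ℕ, f p.1 * g p.2 := by
    rw [← ENNReal.tsum_mul_right]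
    simp_rw [← ENNReal.tsum_mul_left]
    exact (ENNReal.tsum_prod (f := fun a b => f a * g b)).symm
  rw [h1, ← Finset.HasAntidiagonal.sigmaAntidiagonalEquivProd.tsum_eq (fun p : ℕ × ℕ => f p.1 * g p.2),
    ENNReal.tsum_sigma']
  congr 1
  funext n
  rw [tsum_fintype]
  simp only [Finset.HasAntidiagonal.sigmaAntidiagonalEquivProd, Equiv.coe_fn_mk]
  rw [Finset.sum_coe_sort (Finset.HasAntidiagonal.antidiagonal n) (fun kl => f kl.1 * g kl.2),
    Finset.Nat.sum_antidiagonal_eq_sum_range_succ (fun k l => f k * g l)]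

/-- Cauchy-product-type estimate for the `R'`-seminorms (`R' ≥ 0`):
`Σ_k k!^{R'} c^k Σ_{j=0}^{k} a_j b_{k−j}
  ≤ (Σ_k k!^{R'} (2^{R'} c)^k a_k) · (Σ_k k!^{R'} (2^{R'} c)^k b_k)`
for nonnegative sequences `(a_k)`, `(b_k)`; this is the submultiplicativity estimate
`q_{R,c}(φψ) ≤ q_{R,2^R c}(φ) · q_{R,2^R c}(ψ)`. -/
theorem cauchy_product_Rprime_estimate (R' : ℝ) (hR' : 0 ≤ R') (c : ℝ≥0∞)
    (a b : ℕ → ℝ≥0∞) :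
    ∑' k : ℕ, (k.factorial : ℝ≥0∞) ^ R' * c ^ k *
        ∑ j ∈ Finset.range (k + 1), a j * b (k - j) ≤
      (∑' k : ℕ, (k.factorial : ℝ≥0∞) ^ R' * ((2 : ℝ≥0∞) ^ R' * c) ^ k * a k) *
        (∑' k : ℕ, (k.factorial : ℝ≥0∞) ^ R' * ((2 : ℝ≥0∞) ^ R' * c) ^ k * b k) := by
  rw [ennreal_cauchy_product]
  refine ENNReal.tsum_le_tsum fun k => ?_
  rw [Finset.mul_sum]
  refine Finset.sum_le_sum fun j hj => ?_
  have hjk : j ≤ k := Nat.lt_succ_iff.mp (Finset.mem_range.mp hj)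
  have hsplit : ((2 : ℝ≥0∞) ^ R' * c) ^ j * ((2 : ℝ≥0∞) ^ R' * c) ^ (k - j)
      = ((2 : ℝ≥0∞) ^ R') ^ k * c ^ k := by
    rw [← pow_add, Nat.add_sub_cancel' hjk, mul_pow]
  have h2 : ((2 : ℝ≥0∞) ^ R') ^ k = ((2 : ℝ≥0∞) ^ k) ^ R' := by
    rw [← ENNReal.rpow_natCast ((2 : ℝ≥0∞) ^ R') k, ← ENNReal.rpow_mul,
      mul_comm, ENNReal.rpow_mul, ENNReal.rpow_natCast]
  have hkey : (k.factorial : ℝ≥0∞) ^ R'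
      ≤ (j.factorial : ℝ≥0∞) ^ R' * ((k - j).factorial : ℝ≥0∞) ^ R'
        * ((2 : ℝ≥0∞) ^ R') ^ k := by
    rw [h2, ← ENNReal.mul_rpow_of_nonneg _ _ hR', ← ENNReal.mul_rpow_of_nonneg _ _ hR']
    exact ENNReal.rpow_le_rpow (fact_le_aux' hjk) hR'
  calc (k.factorial : ℝ≥0∞) ^ R' * c ^ k * (a j * b (k - j))
      ≤ ((j.factorial : ℝ≥0∞) ^ R' * ((k - j).factorial : ℝ≥0∞) ^ R'
          * ((2 : ℝ≥0∞) ^ R') ^ k) * c ^ k * (a j * b (k - j)) := by gcongr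
    _ = ((j.factorial : ℝ≥0∞) ^ R' * ((2 : ℝ≥0∞) ^ R' * c) ^ j * a j)
        * (((k - j).factorial : ℝ≥0∞) ^ R' * ((2 : ℝ≥0∞) ^ R' * c) ^ (k - j) * b (k - j)) := by
        rw [show ((j.factorial : ℝ≥0∞) ^ R' * ((2 : ℝ≥0∞) ^ R' * c) ^ j * a j)
            * (((k - j).factorial : ℝ≥0∞) ^ R' * ((2 : ℝ≥0∞) ^ R' * c) ^ (k - j) * b (k - j))
            = ((j.factorial : ℝ≥0∞) ^ R' * ((k - j).factorial : ℝ≥0∞) ^ R')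
              * (((2 : ℝ≥0∞) ^ R' * c) ^ j * ((2 : ℝ≥0∞) ^ R' * c) ^ (k - j))
              * (a j * b (k - j)) from by ring, hsplit]
        ring
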